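/- Let ε > 0 and define the operators A₁, A₂ on ℂ³ by the matrices A₁ = ((0, (1+ε)/√2, 0), (0, 0, 0), (−(1+ε)/√2, 0, 0)) and A₂ = ((0, 0, (1+ε)/√2), ((1+ε)/√2, 0, 0), (0, 0, 0)). Then the operator norms ‖[(A₁+A₂)(A₁−A₂)]ⁿ‖ tend to infinity as n → ∞. -/

import Mathlib

noncomputable section

/-- The entry `(1+ε)/√2` as a complex number. -/
def cEntry (ε : ℝ) : ℂ := ((1 + ε) / Real.sqrt 2 : ℝ)

/-- The matrix `A₁` of STATEMENT 9. -/
def matA1 (ε : ℝ) : Matrix (Fin 3) (Fin 3) ℂ :=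
  !![0, cEntry ε, 0; 0, 0, 0; -(cEntry ε), 0, 0]

/-- The matrix `A₂` of STATEMENT 9. -/
def matA2 (ε : ℝ) : Matrix (Fin 3) (Fin 3) ℂ :=
  !![0, 0, cEntry ε; cEntry ε, 0, 0; 0, 0, 0]

lemma cEntry_sq (ε : ℝ) : cEntry ε ^ 2 = (((1 + ε) ^ 2 / 2 : ℝ) : ℂ) := by
  have h2 : (Real.sqrt 2) ^ 2 = 2 := Real.sq_sqrt (by norm_num)
  simp only [cEntry]
  push_cast
  rw [div_pow]
  norm_cast
  rw [h2]
  rw [Complex.ofReal_div, Complex.ofReal_ofNat]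

/-- for every `ε > 0`, the operator norms `‖[(A₁+A₂)(A₁−A₂)]ⁿ‖` of the powers of
`(A₁+A₂)(A₁−A₂)`, acting on the Hilbert space `ℂ³`, tend to infinity as `n → ∞`. -/
theorem norm_pow_tendsto_atTop (ε : ℝ) (hε : 0 < ε) :
    Filter.Tendsto
      (fun n : ℕ =>
        ‖(Matrix.toEuclideanCLM (𝕜 := ℂ) ((matA1 ε + matA2 ε) * (matA1 ε - matA2 ε))) ^ n‖)
      Filter.atTop Filter.atTop := by
  set B : Matrix (Fin 3) (Fin 3) ℂ := (matA1 ε + matA2 ε) * (matA1 ε - matA2 ε) with hB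
  set T := Matrix.toEuclideanCLM (𝕜 := ℂ) B with hT
  set lam : ℂ := -2 * cEntry ε ^ 2 with hlam
  set v : EuclideanSpace ℂ (Fin 3) := (WithLp.equiv 2 (Fin 3 → ℂ)).symm ![1, 0, 0] with hv
  have hmul : B.mulVec ![1, 0, 0] = lam • ![1, 0, 0] := by
    funext i
    fin_cases i <;>
      simp [hB, matA1, matA2, Matrix.mulVec, dotProduct, Fin.sum_univ_three,
        Matrix.mul_apply, hlam] <;> ring
  have hTv : T v = lam • v := by
    rw [hT, hv, WithLp.equiv_symm_apply, Matrix.toEuclideanCLM_toLp]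
    rw [hmul]
    rfl
  have hTnv : ∀ n : ℕ, (T ^ n) v = lam ^ n • v := by
    intro n
    induction n with
    | zero => simp
    | succ n ih =>
      rw [pow_succ, ContinuousLinearMap.mul_apply, hTv, map_smul, ih, smul_smul,
        ← pow_succ']
  have hvnorm : ‖v‖ = 1 := by
    rw [hv, EuclideanSpace.norm_eq]
    simp [Fin.sum_univ_three]
  have hlamc : lam = ((-(1 + ε) ^ 2 : ℝ) : ℂ) := by
    rw [hlam, cEntry_sq]; push_cast; ring
  have hlamnorm : ‖lam‖ = (1 + ε) ^ 2 := by
    rw [hlamc, Complex.norm_real, Real.norm_eq_abs, abs_neg, abs_of_nonneg (by positivity)]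
  have hbound : ∀ n : ℕ, ((1 + ε) ^ 2) ^ n ≤ ‖T ^ n‖ := by
    intro n
    have h1 : ‖(T ^ n) v‖ ≤ ‖T ^ n‖ * ‖v‖ := (T ^ n).le_opNorm v
    rw [hTnv n, norm_smul, hvnorm, norm_pow, hlamnorm] at h1
    linarith
  have hgt : 1 < (1 + ε) ^ 2 := by nlinarith
  exact Filter.tendsto_atTop_mono hbound (tendsto_pow_atTop_atTop_of_one_lt hgt)
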